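/- arXiv:1211.4324 — 4 statements merged into one kernel-verified Lean document; each statement's English description precedes it below -/
import Mathlib

section
/- Let S = K[x_1,...,x_n] be a polynomial ring over a field K, and let c, i be positive integers. Every monomial m of degree ic in S admits a unique decomposition m = m_1 · m_2 ⋯ m_i into monomials m_1,...,m_i each of degree c such that max(m_j) ≤ min(m_{j+1}) for all j, where max(m) (resp. min(m)) denotes the largest (resp. smallest) index of a variable dividing m. -/
open MvPolynomial

namespace Stmt0Aux

variable {α : Type*}

/-- Chop a list into `i` blocks of length `c`. -/
def chunks (c : ℕ) : ℕ → List α → List (List α)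
  | 0, _ => []
  | i + 1, l => l.take c :: chunks c i (l.drop c)

/-- Coercion of a list to a multiset, as a function. -/
def mcoe (l : List α) : Multiset α := ↑l

/-- Turn a list into the finitely supported function counting multiplicities. -/
noncomputable def tofs [DecidableEq α] (t : List α) : α →₀ ℕ := Multiset.toFinsupp (t : Multiset α)

lemma tofs_toMultiset [DecidableEq α] (t : List α) :
    Finsupp.toMultiset (tofs t) = (t : Multiset α) := by
  rw [tofs, Multiset.toFinsupp_toMultiset]

lemma tofs_support [DecidableEq α] (t : List α) (a : α) :
    a ∈ (tofs t).support ↔ a ∈ t := by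
  rw [tofs, Multiset.toFinsupp_support, Multiset.mem_toFinset, Multiset.mem_coe]

lemma chunks_length (c i : ℕ) (l : List α) : (chunks c i l).length = i := by
  induction i generalizing l with
  | zero => rfl
  | succ i ih => simp [chunks, ih]

lemma chunks_flatten {c : ℕ} : ∀ (i : ℕ) (l : List α), l.length = i * c →
    (chunks c i l).flatten = l := by
  intro i
  induction i with
  | zero => intro l hl; simp at hl; simp [chunks, hl]
  | succ i ih =>
    intro l hl
    have hd : (l.drop c).length = i * c := by
      rw [List.length_drop, hl, Nat.succ_mul]; omega
    simp [chunks, ih _ hd]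

lemma chunks_mem_length {c : ℕ} : ∀ (i : ℕ) (l : List α), l.length = i * c →
    ∀ t ∈ chunks c i l, t.length = c := by
  intro i
  induction i with
  | zero => intro l _ t ht; simp [chunks] at ht
  | succ i ih =>
    intro l hl t ht
    have hcl : c ≤ l.length := by rw [hl, Nat.succ_mul]; omega
    have hd : (l.drop c).length = i * c := by
      rw [List.length_drop, hl, Nat.succ_mul]; omega
    rw [chunks] at ht
    rcases List.mem_cons.mp ht with ht | ht
    · subst ht; simp [List.length_take]; omega
    · exact ih _ hd t ht

lemma chunks_subset {c : ℕ} : ∀ (i : ℕ) (l : List α), ∀ t ∈ chunks c i l, t ⊆ l := by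
  intro i
  induction i with
  | zero => intro l t ht; simp [chunks] at ht
  | succ i ih =>
    intro l t ht
    rw [chunks] at ht
    rcases List.mem_cons.mp ht with ht | ht
    · subst ht; exact List.take_subset c l
    · exact List.Subset.trans (ih _ t ht) (List.drop_subset c l)

lemma sorted_take_drop [LinearOrder α] {l : List α} (h : l.Pairwise (· ≤ ·)) (c : ℕ)
    {a b : α} (ha : a ∈ l.take c) (hb : b ∈ l.drop c) : a ≤ b := by
  have h' := h
  rw [← List.take_append_drop c l, List.pairwise_append] at h'
  exact h'.2.2 a ha b hb

lemma chunks_sorted [LinearOrder α] {c : ℕ} {i : ℕ} {l : List α} (h : l.Pairwise (· ≤ ·)) :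
    ∀ t ∈ chunks c i l, t.Pairwise (· ≤ ·) := by
  induction i generalizing l with
  | zero => intro t ht; simp [chunks] at ht
  | succ i ih =>
    intro t ht
    rw [chunks] at ht
    rcases List.mem_cons.mp ht with ht | ht
    · subst ht; exact List.Pairwise.sublist (List.take_sublist c l) h
    · exact ih (List.Pairwise.sublist (List.drop_sublist c l) h) t ht

lemma chunks_chain' [LinearOrder α] {c : ℕ} : ∀ (i : ℕ) (l : List α), l.Pairwise (· ≤ ·) →
    (chunks c i l).Chain' (fun t₁ t₂ => ∀ a ∈ t₁, ∀ b ∈ t₂, a ≤ b) := by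
  intro i
  induction i with
  | zero => intro l _; simp [chunks, List.Chain']
  | succ i ih =>
    intro l hl
    unfold List.Chain'
    rw [chunks, List.isChain_cons]
    refine ⟨?_, ih _ (List.Pairwise.sublist (List.drop_sublist c l) hl)⟩
    intro y hy a ha b hb
    have hy' : y ∈ chunks c i (l.drop c) := List.mem_of_mem_head? hy
    have hb' : b ∈ l.drop c := chunks_subset i _ y hy' hb
    exact sorted_take_drop hl c ha hb'

lemma eq_of_flatten_eq {c : ℕ} : ∀ (L₁ L₂ : List (List α)), L₁.length = L₂.length →
    (∀ l ∈ L₁, l.length = c) → (∀ l ∈ L₂, l.length = c) →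
    L₁.flatten = L₂.flatten → L₁ = L₂ := by
  intro L₁
  induction L₁ with
  | nil =>
    intro L₂ hlen _ _ _
    exact (List.eq_nil_of_length_eq_zero hlen.symm).symm
  | cons l₁ L₁ ih =>
    intro L₂ hlen h₁ h₂ hflat
    cases L₂ with
    | nil => simp at hlen
    | cons l₂ L₂ =>
      simp only [List.flatten_cons] at hflat
      have hll : l₁.length = l₂.length := by
        rw [h₁ l₁ (by simp), h₂ l₂ (by simp)]
      obtain ⟨h1, h2⟩ := List.append_inj hflat hll
      have := ih L₂ (by simpa using hlen) (fun l hl => h₁ l (by simp [hl]))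
        (fun l hl => h₂ l (by simp [hl])) h2
      rw [h1, this]

lemma prod_monomial {K : Type} [Field K] {n : ℕ} (L : List (Fin n →₀ ℕ)) :
    (L.map (fun e => (MvPolynomial.monomial e (1 : K)))).prod
      = MvPolynomial.monomial L.sum (1 : K) := by
  induction L with
  | nil => simp
  | cons e L ih => simp [ih, MvPolynomial.monomial_mul]

lemma coe_flatten (L : List (List α)) :
    ((L.flatten : List α) : Multiset α) = (L.map mcoe).sum := by
  induction L with
  | nil => rfl
  | cons l L ih =>
    rw [List.flatten_cons, List.map_cons, List.sum_cons, ← Multiset.coe_add, ih]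
    rfl

end Stmt0Aux

open Stmt0Aux in
/-- Every monomial of degree `i*c` in `K[x_1,...,x_n]` admits a unique decomposition into
`i` monomials of degree `c` such that `max(m_j) ≤ min(m_{j+1})` for all `j`. -/
theorem stmt_0 (K : Type) [Field K] (n c i : ℕ) (hc : 0 < c) (hi : 0 < i)
    (m : Fin n →₀ ℕ) (hm : m.sum (fun _ k => k) = i * c) :
    ∃! L : List (Fin n →₀ ℕ),
      L.length = i ∧
      (∀ e ∈ L, e.sum (fun _ k => k) = c) ∧
      (L.map (fun e => (MvPolynomial.monomial e (1 : K)))).prod = MvPolynomial.monomial m 1 ∧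
      L.Chain' (fun e₁ e₂ => ∀ a ∈ e₁.support, ∀ b ∈ e₂.support, a ≤ b) := by
  classical
  have htminj : Function.Injective (Finsupp.toMultiset (α := Fin n)) :=
    Function.LeftInverse.injective (g := Multiset.toFinsupp)
      (fun f => Finsupp.toMultiset_toFinsupp f)
  -- degree of a finsupp = card of its multiset
  have hdeg : ∀ e : Fin n →₀ ℕ, e.sum (fun _ k => k) = Multiset.card (Finsupp.toMultiset e) :=
    fun e => (Finsupp.card_toMultiset e).symm
  -- product condition ↔ sum of exponents
  have hprod : ∀ L : List (Fin n →₀ ℕ),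
      ((L.map (fun e => (MvPolynomial.monomial e (1 : K)))).prod = MvPolynomial.monomial m 1
        ↔ L.sum = m) := by
    intro L
    rw [prod_monomial]
    constructor
    · intro h
      exact MvPolynomial.monomial_left_injective (one_ne_zero) h
    · intro h; rw [h]
  set s : List (Fin n) := Multiset.sort (Finsupp.toMultiset m) (· ≤ ·) with hs
  have hssorted : s.Pairwise (· ≤ ·) := Multiset.pairwise_sort _ _
  have hslen : s.length = i * c := by
    rw [hs, Multiset.length_sort, ← hdeg, hm]
  set key : (Fin n →₀ ℕ) → List (Fin n) :=
    fun e => Multiset.sort (Finsupp.toMultiset e) (· ≤ ·) with hkey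
  set Lc : List (Fin n →₀ ℕ) := (chunks c i s).map tofs with hLc
  have hrecover : ∀ e : Fin n →₀ ℕ, tofs (key e) = e := by
    intro e
    rw [hkey, tofs, Multiset.sort_eq, Finsupp.toMultiset_toFinsupp]
  -- properties of Lc
  have hLclen : Lc.length = i := by rw [hLc, List.length_map, chunks_length]
  have hLcdeg : ∀ e ∈ Lc, e.sum (fun _ k => k) = c := by
    intro e he
    rw [hLc, List.mem_map] at he
    obtain ⟨t, ht, rfl⟩ := he
    rw [hdeg, tofs_toMultiset, Multiset.coe_card]
    exact chunks_mem_length i s hslen t ht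
  have hLcsum : Lc.sum = m := by
    apply htminj
    rw [map_list_sum, hLc, List.map_map]
    have heq : ((chunks c i s).map (⇑Finsupp.toMultiset ∘ tofs))
        = (chunks c i s).map mcoe :=
      List.map_congr_left (fun t _ => tofs_toMultiset t)
    rw [heq, ← coe_flatten, chunks_flatten i s hslen, hs, Multiset.sort_eq]
  have hLcchain : Lc.Chain' (fun e₁ e₂ => ∀ a ∈ e₁.support, ∀ b ∈ e₂.support, a ≤ b) := by
    unfold List.Chain'
    rw [hLc, List.isChain_map]
    apply List.IsChain.imp ?_ (chunks_chain' i s hssorted)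
    intro t₁ t₂ h a ha b hb
    rw [tofs_support] at ha hb
    exact h a ha b hb
  refine ⟨Lc, ⟨hLclen, hLcdeg, (hprod Lc).2 hLcsum, hLcchain⟩, ?_⟩
  -- uniqueness
  rintro L ⟨hlen, hdegL, hprodL, hchain⟩
  have hsum : L.sum = m := (hprod L).1 hprodL
  have hkeylen : ∀ e ∈ L, (key e).length = c := by
    intro e he
    rw [hkey, Multiset.length_sort, ← hdeg, hdegL e he]
  have hne : [] ∉ L.map key := by
    rw [List.mem_map]
    rintro ⟨e, he, hke⟩
    have h0 := hkeylen e he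
    rw [hke] at h0
    simp at h0
    omega
  -- the flatten of keys is sorted
  have hflat_sorted : ((L.map key).flatten).Pairwise (· ≤ ·) := by
    rw [← List.isChain_iff_pairwise]
    rw [List.isChain_flatten hne]
    constructor
    · intro l hl
      rw [List.mem_map] at hl
      obtain ⟨e, _, rfl⟩ := hl
      rw [List.isChain_iff_pairwise]
      exact Multiset.pairwise_sort _ _
    · rw [List.isChain_map]
      apply List.IsChain.imp ?_ hchain
      intro e₁ e₂ h x hx y hy
      have hx' : x ∈ key e₁ := List.mem_of_mem_getLast? hx
      have hy' : y ∈ key e₂ := List.mem_of_mem_head? hy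
      rw [hkey, Multiset.mem_sort, Finsupp.mem_toMultiset] at hx' hy'
      exact h x hx' y hy'
  -- the flatten has the same multiset as s
  have hmult : (((L.map key).flatten : List (Fin n)) : Multiset (Fin n))
      = Finsupp.toMultiset m := by
    rw [coe_flatten, List.map_map]
    have heq : (L.map (mcoe ∘ key)) = L.map Finsupp.toMultiset := by
      apply List.map_congr_left
      intro e _
      show mcoe (key e) = _
      rw [mcoe, hkey, Multiset.sort_eq]
    rw [heq, ← map_list_sum, hsum]
  have hflat : (L.map key).flatten = s := by
    apply List.Perm.eq_of_pairwise' hflat_sorted hssorted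
    rw [← Multiset.coe_eq_coe, hmult, hs, Multiset.sort_eq]
  have hkeyseq : L.map key = chunks c i s := by
    apply eq_of_flatten_eq (c := c)
    · rw [List.length_map, hlen, chunks_length]
    · intro l hl
      rw [List.mem_map] at hl
      obtain ⟨e, he, rfl⟩ := hl
      exact hkeylen e he
    · exact chunks_mem_length i s hslen
    · rw [hflat, chunks_flatten i s hslen]
  calc L = L.map (fun e => tofs (key e)) := by
        simp [hrecover]
    _ = (L.map key).map tofs := by rw [List.map_map]; rfl
    _ = Lc := by rw [hkeyseq, hLc]
end

section
/- Let S = K[x_1,...,x_n] and let I ⊂ S be an ideal generated by monomials of degree 2. Then R = S/I is strongly Koszul with respect to the basis of R_1 given by the residue classes of the variables: for every subset Y of the variable classes and every variable class x not in Y, the colon ideal (Y) : x in R is generated by a subset of the variable classes. -/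
open MvPolynomial

set_option synthInstance.maxHeartbeats 1000000
set_option maxHeartbeats 1000000

/-- A finitely supported `ℕ`-valued function whose total sum is `1` is a `single j 1`. -/
lemma sk_deg_one {n : ℕ} (e : Fin n →₀ ℕ) (h : e.sum (fun _ k => k) = 1) :
    ∃ j, e = Finsupp.single j 1 := by
  have h' : ∑ t ∈ e.support, e t = 1 := by simpa [Finsupp.sum] using h
  have hne : e.support.Nonempty := by
    by_contra hc
    rw [Finset.not_nonempty_iff_eq_empty] at hc
    rw [hc] at h'; simp at h'
  obtain ⟨j, hj⟩ := hne
  have hj1 : e j = 1 := by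
    have h1 : 1 ≤ e j := Nat.one_le_iff_ne_zero.mpr (Finsupp.mem_support_iff.mp hj)
    have h2 : e j ≤ ∑ t ∈ e.support, e t :=
      Finset.single_le_sum (fun _ _ => Nat.zero_le _) hj
    omega
  refine ⟨j, Finsupp.ext fun k => ?_⟩
  rcases eq_or_ne k j with rfl | hkj
  · simp [hj1]
  · rw [Finsupp.single_apply, if_neg (Ne.symm hkj)]
    by_contra hk
    have hks : k ∈ e.support := Finsupp.mem_support_iff.mpr hk
    have hsub : ({j, k} : Finset (Fin n)) ⊆ e.support := by
      intro t ht
      simp only [Finset.mem_insert, Finset.mem_singleton] at ht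
      rcases ht with rfl | rfl <;> assumption
    have hsum : e j + e k ≤ ∑ t ∈ e.support, e t := by
      calc e j + e k = ∑ t ∈ ({j, k} : Finset (Fin n)), e t :=
            (Finset.sum_pair (Ne.symm hkj)).symm
        _ ≤ _ := Finset.sum_le_sum_of_subset hsub
    have h1 : 1 ≤ e k := Nat.one_le_iff_ne_zero.mpr hk
    omega

/-- A degree-two exponent vector containing `x i` is `x i * x j` for some `j`. -/
lemma sk_deg_two {n : ℕ} (s : Fin n →₀ ℕ) (h2 : s.sum (fun _ k => k) = 2) (i : Fin n)
    (hi : 1 ≤ s i) : ∃ j, s = Finsupp.single i 1 + Finsupp.single j 1 := by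
  have hle : Finsupp.single i 1 ≤ s := Finsupp.single_le_iff.mpr hi
  have ht : Finsupp.single i 1 + (s - Finsupp.single i 1) = s := add_tsub_cancel_of_le hle
  have hts : (s - Finsupp.single i 1).sum (fun _ k => k) = 1 := by
    have h1 : (Finsupp.single i 1 + (s - Finsupp.single i 1)).sum (fun _ k => k) =
        (Finsupp.single i 1).sum (fun (_ : Fin n) (k : ℕ) => k) +
          (s - Finsupp.single i 1).sum (fun _ k => k) :=
      Finsupp.sum_add_index' (fun _ => rfl) (fun _ _ _ => rfl)
    rw [ht, h2] at h1
    have h3 : (Finsupp.single i 1).sum (fun (_ : Fin n) (k : ℕ) => k) = 1 :=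
      Finsupp.sum_single_index rfl
    omega
  obtain ⟨j, hj⟩ := sk_deg_one _ hts
  exact ⟨j, by rw [← ht, hj]⟩

/-- The key combinatorial fact about monomial divisibility for the colon ideal computation. -/
lemma sk_key {n : ℕ} (E : Set (Fin n →₀ ℕ)) (hE : ∀ e ∈ E, e.sum (fun _ k => k) = 2)
    (Y : Set (Fin n)) (i : Fin n) (hiY : i ∉ Y) (m : Fin n →₀ ℕ) :
    (∃ s ∈ (fun j => Finsupp.single j 1) '' Y ∪ E, s ≤ m + Finsupp.single i 1) ↔
    (∃ s ∈ (fun j => Finsupp.single j 1) ''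
        (Y ∪ {j | Finsupp.single i 1 + Finsupp.single j 1 ∈ E}) ∪ E, s ≤ m) := by
  constructor
  · rintro ⟨s, hs | hs, hle⟩
    · obtain ⟨j, hjY, rfl⟩ := hs
      have hji : j ≠ i := fun h => hiY (h ▸ hjY)
      refine ⟨Finsupp.single j 1, Set.mem_union_left _ ⟨j, Or.inl hjY, rfl⟩, ?_⟩
      rw [Finsupp.single_le_iff]
      have := hle j
      simp [Finsupp.single_apply, if_neg (Ne.symm hji), if_neg hji] at this
      omega
    · by_cases hsm : s ≤ m
      · exact ⟨s, Set.mem_union_right _ hs, hsm⟩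
      · have hsi : 1 ≤ s i := by
          by_contra hc
          apply hsm
          intro k
          have h := hle k
          simp only [Finsupp.add_apply, Finsupp.single_apply] at h
          rcases eq_or_ne i k with rfl | hik
          · rw [if_pos rfl] at h; omega
          · rw [if_neg hik, add_zero] at h; exact h
        obtain ⟨j, rfl⟩ := sk_deg_two s (hE s hs) i hsi
        rcases eq_or_ne j i with rfl | hji
        · refine ⟨Finsupp.single j 1, Set.mem_union_left _ ⟨j, Or.inr hs, rfl⟩, ?_⟩
          rw [Finsupp.single_le_iff]
          have := hle j
          simp at this
          omega
        · refine ⟨Finsupp.single j 1, Set.mem_union_left _ ⟨j, Or.inr hs, rfl⟩, ?_⟩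
          rw [Finsupp.single_le_iff]
          have := hle j
          simp [Finsupp.single_apply, if_neg (Ne.symm hji), if_neg hji] at this
          omega
  · rintro ⟨s, hs | hs, hle⟩
    · obtain ⟨j, hjY | hjE, rfl⟩ := hs
      · exact ⟨Finsupp.single j 1, Set.mem_union_left _ ⟨j, hjY, rfl⟩,
          hle.trans (le_add_right le_rfl)⟩
      · refine ⟨Finsupp.single i 1 + Finsupp.single j 1, Set.mem_union_right _ hjE, ?_⟩
        rw [add_comm m]
        exact add_le_add_right hle _
    · exact ⟨s, Set.mem_union_right _ hs, hle.trans (le_add_right le_rfl)⟩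

/-- If `I ⊂ S = K[x_1,...,x_n]` is generated by monomials of degree 2, then `R = S/I` is
strongly Koszul with respect to the residue classes of the variables: every colon ideal
`(Y) : x` of an ideal generated by a subset `Y` of the variable classes by a variable class
`x ∉ Y` is again generated by a subset of the variable classes. -/
theorem stmt_10 (K : Type) [Field K] (n : ℕ) (E : Set (Fin n →₀ ℕ))
    (hE : ∀ e ∈ E, e.sum (fun _ k => k) = 2)
    (I : Ideal (MvPolynomial (Fin n) K))
    (hI : I = Ideal.span ((fun e => (MvPolynomial.monomial e (1 : K))) '' E))
    (xbar : Fin n → (MvPolynomial (Fin n) K ⧸ I))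
    (hx : ∀ i, xbar i = Ideal.Quotient.mk I (X i)) :
    ∀ (Y : Set (Fin n)) (i : Fin n), xbar i ∉ xbar '' Y →
      ∃ Z : Set (Fin n),
        Submodule.colon (Ideal.span (xbar '' Y)) (Ideal.span {xbar i}) =
          Ideal.span (xbar '' Z) := by
  intro Y i hiY
  have hiY' : i ∉ Y := fun h => hiY ⟨i, h, rfl⟩
  refine ⟨Y ∪ {j | Finsupp.single i 1 + Finsupp.single j 1 ∈ E}, ?_⟩
  have hxx : ∀ W : Set (Fin n), Ideal.span (xbar '' W) =
      Ideal.map (Ideal.Quotient.mk I)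
        (Ideal.span ((fun s => monomial s (1 : K)) '' ((fun j => Finsupp.single j 1) '' W))) := by
    intro W
    rw [Ideal.map_span]
    congr 1
    rw [Set.image_image, Set.image_image]
    exact Set.image_congr' hx
  ext r
  obtain ⟨f, rfl⟩ := Ideal.Quotient.mk_surjective r
  rw [Ideal.mem_colon_span_singleton, hx i, hxx Y, hxx, ← map_mul,
    Ideal.mem_quotient_iff_mem_sup, Ideal.mem_quotient_iff_mem_sup, hI,
    ← Ideal.span_union, ← Ideal.span_union, ← Set.image_union, ← Set.image_union,
    mem_ideal_span_monomial_image, mem_ideal_span_monomial_image]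
  have hsup : ∀ m, m ∈ (f * X i).support ↔ ∃ m' ∈ f.support, m' + Finsupp.single i 1 = m := by
    intro m
    simp [support_mul_X, addRightEmbedding_apply]
  constructor
  · intro H m hm
    exact (sk_key E hE Y i hiY' m).mp (H _ ((hsup _).mpr ⟨m, hm, rfl⟩))
  · intro H m hm
    obtain ⟨m', hm', rfl⟩ := (hsup m).mp hm
    exact (sk_key E hE Y i hiY' m').mpr (H m' hm')
end

section
/- Let S = K[x_1,...,x_n] and let I ⊂ S be an ideal generated by monomials of degree ≤ d. Then for every c ≥ d − 1, the c-th Veronese subalgebra R^(c) of R = S/I is strongly Koszul with respect to the basis of (R^(c))_1 consisting of the residue classes of the degree-c monomials not in I. -/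
open MvPolynomial

set_option synthInstance.maxHeartbeats 1000000
set_option maxHeartbeats 1000000

namespace Stmt11Aux

variable {n : ℕ}

/-- total degree of an exponent vector -/
def deg (e : Fin n →₀ ℕ) : ℕ := e.sum fun _ k => k

lemma deg_add (e f : Fin n →₀ ℕ) : deg (e + f) = deg e + deg f :=
  Finsupp.sum_add_index' (fun _ => rfl) (fun _ _ _ => rfl)

lemma apply_le_deg (e : Fin n →₀ ℕ) (i : Fin n) : e i ≤ deg e := by
  by_cases h : e i = 0
  · simp [h]
  · exact Finset.single_le_sum (f := fun j => e j) (fun _ _ => Nat.zero_le _)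
      (Finsupp.mem_support_iff.mpr h)

lemma deg_eq_zero {e : Fin n →₀ ℕ} (h : deg e = 0) : e = 0 := by
  ext i
  have := apply_le_deg e i
  simp only [Finsupp.coe_zero, Pi.zero_apply]
  omega

lemma deg_mono {e f : Fin n →₀ ℕ} (h : e ≤ f) : deg e ≤ deg f := by
  have : e + (f - e) = f := add_tsub_cancel_of_le h
  rw [← this, deg_add]
  omega

lemma eq_of_le_of_deg_eq {e f : Fin n →₀ ℕ} (h : e ≤ f) (hd : deg e = deg f) : e = f := by
  have h1 : e + (f - e) = f := add_tsub_cancel_of_le h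
  have h2 : deg (f - e) = 0 := by
    have := deg_add e (f - e)
    rw [h1] at this; omega
  rw [← h1, deg_eq_zero h2, add_zero]

lemma split (a : ℕ) : ∀ (b : ℕ) (e : Fin n →₀ ℕ), deg e = a + b →
    ∃ e1 e2 : Fin n →₀ ℕ, deg e1 = a ∧ deg e2 = b ∧ e = e1 + e2 := by
  induction a with
  | zero => intro b e he; exact ⟨0, e, by simp [deg], by simpa using he, by simp⟩
  | succ a ih =>
    intro b e he
    have hne : e ≠ 0 := by
      intro h; rw [h] at he; simp [deg] at he; omega
    have : ∃ i, e i ≠ 0 := by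
      by_contra h; push_neg at h; exact hne (Finsupp.ext fun i => h i)
    obtain ⟨i, hi⟩ := this
    have hle : Finsupp.single i 1 ≤ e := Finsupp.single_le_iff.mpr (by omega)
    have hsum : Finsupp.single i 1 + (e - Finsupp.single i 1) = e := add_tsub_cancel_of_le hle
    have hds : deg (Finsupp.single i 1) = 1 := by
      simp [deg, Finsupp.sum_single_index]
    have hde' : deg (e - Finsupp.single i 1) = a + b := by
      have := deg_add (Finsupp.single i 1) (e - Finsupp.single i 1)
      rw [hsum] at this; omega
    obtain ⟨e1, e2, h1, h2, h3⟩ := ih b _ hde'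
    refine ⟨Finsupp.single i 1 + e1, e2, ?_, h2, ?_⟩
    · rw [deg_add, hds, h1]; omega
    · rw [add_assoc, ← h3, hsum]

lemma between {h m : Fin n →₀ ℕ} {c : ℕ} (hle : h ≤ m) (h1 : deg h ≤ c) (h2 : c ≤ deg m) :
    ∃ m', h ≤ m' ∧ m' ≤ m ∧ deg m' = c := by
  have hsum : h + (m - h) = m := add_tsub_cancel_of_le hle
  have hdm : deg (m - h) = (c - deg h) + (deg m - c) := by
    have := deg_add h (m - h); rw [hsum] at this; omega
  obtain ⟨e1, e2, he1, he2, he3⟩ := split (c - deg h) (deg m - c) (m - h) hdm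
  refine ⟨h + e1, le_add_right le_rfl, ?_, by rw [deg_add, he1]; omega⟩
  exact le_iff_exists_add.mpr ⟨e2, by rw [add_assoc, ← he3, hsum]⟩

variable {K : Type} [Field K] {c : ℕ} {E : Set (Fin n →₀ ℕ)}
  {I : Ideal (MvPolynomial (Fin n) K)} {A : Subalgebra K (MvPolynomial (Fin n) K ⧸ I)}

lemma mem_I_iff (hI : I = Ideal.span ((fun e => (MvPolynomial.monomial e (1 : K))) '' E))
    (e : Fin n →₀ ℕ) : monomial e (1 : K) ∈ I ↔ ∃ g ∈ E, g ≤ e := by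
  rw [hI, mem_ideal_span_monomial_image]
  simp [support_monomial]

lemma memA
    (hA : A = Algebra.adjoin K
      {r : MvPolynomial (Fin n) K ⧸ I | ∃ e : Fin n →₀ ℕ,
        e.sum (fun _ k => k) = c ∧ r = Ideal.Quotient.mk I (MvPolynomial.monomial e 1)})
    (e : Fin n →₀ ℕ) (h : c ∣ deg e) : Ideal.Quotient.mk I (monomial e 1) ∈ A := by
  obtain ⟨j, hj⟩ := h
  induction j generalizing e with
  | zero =>
    have : e = 0 := deg_eq_zero (by omega)
    subst this
    simpa [monomial_zero'] using A.one_mem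
  | succ j ih =>
    have hde : deg e = c + c * j := by rw [hj]; ring
    obtain ⟨e1, e2, h1, h2, h3⟩ := split c (c * j) e hde
    have hmul : (monomial e (1:K)) = monomial e1 1 * monomial e2 1 := by
      rw [monomial_mul, one_mul, h3]
    rw [hmul, map_mul]
    refine A.mul_mem ?_ (ih e2 h2)
    rw [hA]
    exact Algebra.subset_adjoin ⟨e1, h1, rfl⟩

lemma lift (hA : A = Algebra.adjoin K
      {r : MvPolynomial (Fin n) K ⧸ I | ∃ e : Fin n →₀ ℕ,
        e.sum (fun _ k => k) = c ∧ r = Ideal.Quotient.mk I (MvPolynomial.monomial e 1)})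
    (a : A) : ∃ p : MvPolynomial (Fin n) K,
      (∀ m ∈ p.support, c ∣ deg m) ∧ Ideal.Quotient.mk I p = ↑a := by
  classical
  set W : Subalgebra K (MvPolynomial (Fin n) K) :=
  { carrier := {p | ∀ m ∈ p.support, c ∣ deg m}
    mul_mem' := by
      intro p q hp hq m hm
      have := MvPolynomial.support_mul p q hm
      rw [Finset.mem_add] at this
      obtain ⟨a, ha, b, hb, rfl⟩ := this
      rw [deg_add]
      exact Dvd.dvd.add (hp a ha) (hq b hb)
    add_mem' := by
      intro p q hp hq m hm
      rcases Finset.mem_union.mp (MvPolynomial.support_add hm) with h | h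
      exacts [hp m h, hq m h]
    algebraMap_mem' := by
      intro k m hm
      have hC : (algebraMap K (MvPolynomial (Fin n) K) k) = monomial 0 k := by
        rw [MvPolynomial.algebraMap_eq, C_apply]
      rw [hC, support_monomial] at hm
      split_ifs at hm <;> simp_all [deg]
  } with hW
  have hset : {r : MvPolynomial (Fin n) K ⧸ I | ∃ e : Fin n →₀ ℕ,
        e.sum (fun _ k => k) = c ∧ r = Ideal.Quotient.mk I (MvPolynomial.monomial e 1)}
      = (Ideal.Quotient.mkₐ K I) '' {q | ∃ e : Fin n →₀ ℕ, deg e = c ∧ q = monomial e 1} := by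
    ext r
    constructor
    · rintro ⟨e, he, rfl⟩; exact ⟨monomial e 1, ⟨e, he, rfl⟩, rfl⟩
    · rintro ⟨q, ⟨e, he, rfl⟩, rfl⟩; exact ⟨e, he, rfl⟩
  have hA2 : A = (Algebra.adjoin K {q | ∃ e : Fin n →₀ ℕ, deg e = c ∧ q = monomial e 1}).map
      (Ideal.Quotient.mkₐ K I) := by
    rw [hA, hset, Algebra.adjoin_image]
  obtain ⟨r, hr⟩ := a
  rw [hA2, Subalgebra.mem_map] at hr
  obtain ⟨p, hp, hpa⟩ := hr
  have hpW : p ∈ W := by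
    refine Algebra.adjoin_le ?_ hp
    rintro q ⟨e, he, rfl⟩
    intro m hm
    rw [support_monomial] at hm
    simp only [one_ne_zero, if_false, Finset.mem_singleton] at hm
    subst hm
    exact ⟨1, by rw [he, mul_one]⟩
  exact ⟨p, hpW, hpa⟩

end Stmt11Aux

open Stmt11Aux

/-- If `I ⊂ S = K[x_1,...,x_n]` is generated by monomials of degree `≤ d`, then for every
`c ≥ d - 1` the `c`-th Veronese subalgebra of `R = S/I` (the subalgebra generated by the
classes of the degree-`c` monomials) is strongly Koszul with respect to the basis consisting
of the residue classes of the degree-`c` monomials not in `I`. -/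
theorem stmt_11 (K : Type) [Field K] (n d c : ℕ) (hc : d - 1 ≤ c) (hc0 : 0 < c)
    (E : Set (Fin n →₀ ℕ)) (hE : ∀ e ∈ E, e.sum (fun _ k => k) ≤ d)
    (I : Ideal (MvPolynomial (Fin n) K))
    (hI : I = Ideal.span ((fun e => (MvPolynomial.monomial e (1 : K))) '' E))
    (A : Subalgebra K (MvPolynomial (Fin n) K ⧸ I))
    (hA : A = Algebra.adjoin K
      {r : MvPolynomial (Fin n) K ⧸ I | ∃ e : Fin n →₀ ℕ,
        e.sum (fun _ k => k) = c ∧ r = Ideal.Quotient.mk I (MvPolynomial.monomial e 1)})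
    (V : Set A)
    (hV : V = {a : A | ∃ e : Fin n →₀ ℕ, e.sum (fun _ k => k) = c ∧
      MvPolynomial.monomial e (1 : K) ∉ I ∧
      (a : MvPolynomial (Fin n) K ⧸ I) = Ideal.Quotient.mk I (MvPolynomial.monomial e 1)}) :
    ∀ (Y : Set A), Y ⊆ V → ∀ x ∈ V, x ∉ Y →
      ∃ Z : Set A, Z ⊆ V ∧
        Submodule.colon (Ideal.span Y) (Ideal.span {x}) = Ideal.span Z := by
  classical
  intro Y hYV x hxV hxY
  rw [hV] at hxV
  obtain ⟨eu, hdu, huI, hxu⟩ := hxV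
  -- the exponent sets
  set F : Set (Fin n →₀ ℕ) := {e | deg e = c ∧ ∃ y ∈ Y,
    (y : MvPolynomial (Fin n) K ⧸ I) = Ideal.Quotient.mk I (monomial e 1)} with hF
  set G : Set (Fin n →₀ ℕ) := E ∪ F with hG
  set J : Ideal (MvPolynomial (Fin n) K) :=
    Ideal.span ((fun e => monomial e (1:K)) '' G) with hJ
  -- the monomial elements of A
  set aMon : (Fin n →₀ ℕ) → A := fun m =>
    if h : c ∣ deg m then ⟨Ideal.Quotient.mk I (monomial m 1), memA hA m h⟩ else 0 with haMon
  have haMonCoe : ∀ m, c ∣ deg m →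
      (aMon m : MvPolynomial (Fin n) K ⧸ I) = Ideal.Quotient.mk I (monomial m 1) := by
    intro m h; simp [haMon, dif_pos h]
  set Z : Set A := {a : A | a ∈ V ∧ a ∈ Submodule.colon (Ideal.span Y) (Ideal.span {x})} with hZ
  refine ⟨Z, fun a ha => ha.1, le_antisymm ?_ (Ideal.span_le.mpr fun a ha => ha.2)⟩
  -- core lemma
  have hcore : ∀ m : Fin n →₀ ℕ, c ∣ deg m → (∃ g ∈ G, g ≤ m + eu) →
      aMon m ∈ Ideal.span Z := by
    intro m hdvd hg
    by_cases hmI : monomial m (1:K) ∈ I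
    · have hz : aMon m = 0 := Subtype.ext (by
        rw [haMonCoe m hdvd]
        exact Ideal.Quotient.eq_zero_iff_mem.mpr hmI)
      rw [hz]; exact zero_mem _
    obtain ⟨g, hgG, hgle⟩ := hg
    obtain ⟨j, hj⟩ := hdvd
    rcases Nat.eq_zero_or_pos j with hj0 | hjpos
    · -- degree 0 monomial : impossible
      exfalso
      have hm0 : m = 0 := deg_eq_zero (by rw [hj, hj0, mul_zero])
      subst hm0
      rw [zero_add] at hgle
      rcases hgG with hgE | hgF
      · exact huI ((mem_I_iff hI eu).mpr ⟨g, hgE, hgle⟩)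
      · obtain ⟨hdg, y, hy, hye⟩ := hgF
        have hgeu : g = eu := eq_of_le_of_deg_eq hgle (by rw [hdg]; exact hdu.symm)
        have hyx : y = x := Subtype.ext (by rw [hye, hgeu, ← hxu])
        exact hxY (hyx ▸ hy)
    · -- degree ≥ c
      have hcledm : c ≤ deg m := by
        rw [hj]; exact Nat.le_mul_of_pos_right c hjpos
      have hhm : g ⊓ m ≤ m := inf_le_right
      have hhg : g ⊓ m ≤ g := inf_le_left
      have hdh : deg (g ⊓ m) ≤ c := by
        by_contra hlt
        push_neg at hlt
        rcases hgG with hgE | hgF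
        · have hdgd : deg g ≤ d := hE g hgE
          have hmono : deg (g ⊓ m) ≤ deg g := deg_mono hhg
          have hdg : deg (g ⊓ m) = deg g := by omega
          have heq : g ⊓ m = g := eq_of_le_of_deg_eq hhg hdg
          exact hmI ((mem_I_iff hI m).mpr ⟨g, hgE, heq ▸ hhm⟩)
        · have hmono : deg (g ⊓ m) ≤ deg g := deg_mono hhg
          rw [hgF.1] at hmono; omega
      obtain ⟨m', hm'1, hm'2, hm'3⟩ := between hhm hdh hcledm
      have hm'I : monomial m' (1:K) ∉ I := fun hmem => by
        obtain ⟨g', hg'E, hg'le⟩ := (mem_I_iff hI m').mp hmem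
        exact hmI ((mem_I_iff hI m).mpr ⟨g', hg'E, hg'le.trans hm'2⟩)
      have hgm' : g ≤ m' + eu := by
        rw [Finsupp.le_def]
        intro i
        have h1 : g i ≤ (m + eu) i := Finsupp.le_def.mp hgle i
        rw [Finsupp.add_apply] at h1
        have h2 : g i ⊓ m i ≤ m' i := by
          have := Finsupp.le_def.mp hm'1 i
          rwa [Finsupp.inf_apply] at this
        rw [Finsupp.add_apply]
        omega
      have hm'c : c ∣ deg m' := by rw [hm'3]
      have hm'colon : aMon m' ∈ Submodule.colon (Ideal.span Y) (Ideal.span {x}) := by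
        rw [Ideal.mem_colon_span_singleton]
        have hcoe : ((aMon m' * x : A) : MvPolynomial (Fin n) K ⧸ I)
            = Ideal.Quotient.mk I (monomial (m' + eu) 1) := by
          rw [Subalgebra.coe_mul, haMonCoe m' hm'c, hxu, ← map_mul, monomial_mul, one_mul]
        rcases hgG with hgE | hgF
        · have hmem : monomial (m' + eu) (1:K) ∈ I := (mem_I_iff hI _).mpr ⟨g, hgE, hgm'⟩
          have hz : aMon m' * x = 0 := Subtype.ext (by
            rw [hcoe]; exact Ideal.Quotient.eq_zero_iff_mem.mpr hmem)
          rw [hz]; exact zero_mem _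
        · obtain ⟨hdg, y, hy, hye⟩ := hgF
          have hsum : g + ((m' + eu) - g) = m' + eu := add_tsub_cancel_of_le hgm'
          have hdt' : deg ((m' + eu) - g) = c := by
            have h1 := deg_add g ((m' + eu) - g)
            rw [hsum, deg_add, hm'3, hdg] at h1
            have h2 : deg eu = c := hdu
            omega
          have ht'c : c ∣ deg ((m' + eu) - g) := by rw [hdt']
          have heq : aMon m' * x = aMon ((m' + eu) - g) * y := Subtype.ext (by
            rw [hcoe, Subalgebra.coe_mul, haMonCoe _ ht'c, hye, ← map_mul, monomial_mul,
              one_mul, tsub_add_cancel_of_le hgm'])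
          rw [heq]
          exact Ideal.mul_mem_left _ _ (Ideal.subset_span hy)
      have hm'V : aMon m' ∈ V := by
        rw [hV]
        exact ⟨m', hm'3, hm'I, haMonCoe m' hm'c⟩
      have hsum2 : m' + (m - m') = m := add_tsub_cancel_of_le hm'2
      have htc : c ∣ deg (m - m') := by
        have h1 : deg m = c + deg (m - m') := by
          conv_lhs => rw [← hsum2]
          rw [deg_add, hm'3]
        have h2 : deg (m - m') = deg m - c := by omega
        rw [h2]
        exact Nat.dvd_sub ⟨j, hj⟩ dvd_rfl
      have hmm : aMon m = aMon (m - m') * aMon m' := Subtype.ext (by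
        rw [Subalgebra.coe_mul, haMonCoe m ⟨j, hj⟩, haMonCoe _ htc, haMonCoe m' hm'c,
          ← map_mul, monomial_mul, one_mul, tsub_add_cancel_of_le hm'2])
      rw [hmm]
      exact Ideal.mul_mem_left _ _ (Ideal.subset_span ⟨hm'V, hm'colon⟩)
  -- now the main inclusion
  intro a ha
  have hax : a * x ∈ Ideal.span Y := Ideal.mem_colon_span_singleton.mp ha
  obtain ⟨p, hpsupp, hpπ⟩ := lift hA a
  -- p * u ∈ J
  have hpu : p * monomial eu 1 ∈ J := by
    have hcoe : ((a * x : A) : MvPolynomial (Fin n) K ⧸ I)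
        ∈ Ideal.span ((A.val : A → MvPolynomial (Fin n) K ⧸ I) '' Y) := by
      have := Ideal.mem_map_of_mem (A.val : A →+* MvPolynomial (Fin n) K ⧸ I) hax
      rwa [Ideal.map_span] at this
    have hsub : Ideal.span ((A.val : A → MvPolynomial (Fin n) K ⧸ I) '' Y)
        ≤ Ideal.map (Ideal.Quotient.mk I) (Ideal.span ((fun e => monomial e (1:K)) '' F)) := by
      rw [Ideal.span_le]
      rintro _ ⟨y, hy, rfl⟩
      have hyV := hYV hy
      rw [hV] at hyV
      obtain ⟨e, hde, heI, hye⟩ := hyV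
      have heF : e ∈ F := ⟨hde, y, hy, hye⟩
      show A.val y ∈ _
      rw [show A.val y = Ideal.Quotient.mk I (monomial e 1) from hye]
      exact Ideal.mem_map_of_mem _ (Ideal.subset_span ⟨e, heF, rfl⟩)
    have h1 : Ideal.Quotient.mk I (p * monomial eu 1)
        ∈ Ideal.map (Ideal.Quotient.mk I) (Ideal.span ((fun e => monomial e (1:K)) '' F)) := by
      have h2 : Ideal.Quotient.mk I (p * monomial eu 1)
          = ((a * x : A) : MvPolynomial (Fin n) K ⧸ I) := by
        rw [map_mul, hpπ, ← hxu, Subalgebra.coe_mul]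
      rw [h2]
      exact hsub hcoe
    obtain ⟨w, hw, hww⟩ := Ideal.mem_map_iff_of_surjective _ Ideal.Quotient.mk_surjective |>.mp h1
    have hdiff : p * monomial eu 1 - w ∈ I := Ideal.Quotient.eq.mp hww.symm
    have hIJ : I ≤ J := by
      rw [hI, hJ]; exact Ideal.span_mono (Set.image_mono Set.subset_union_left)
    have hFJ : Ideal.span ((fun e => monomial e (1:K)) '' F) ≤ J := by
      rw [hJ]; exact Ideal.span_mono (Set.image_mono Set.subset_union_right)
    have hrw : p * monomial eu 1 = (p * monomial eu 1 - w) + w := by ring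
    rw [hrw]
    exact J.add_mem (hIJ hdiff) (hFJ hw)
  have hkey : ∀ m ∈ p.support, ∃ g ∈ G, g ≤ m + eu := by
    intro m hm
    have hms : m + eu ∈ (p * monomial eu 1).support := by
      rw [mem_support_iff, coeff_mul_monomial, mul_one]
      exact mem_support_iff.mp hm
    rw [hJ] at hpu
    exact mem_ideal_span_monomial_image.mp hpu _ hms
  -- decompose a into monomials
  have hrepr : a = ∑ m ∈ p.support, coeff m p • aMon m := by
    apply Subtype.val_injective
    have h1 : (↑(∑ m ∈ p.support, coeff m p • aMon m) : MvPolynomial (Fin n) K ⧸ I)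
        = ∑ m ∈ p.support, coeff m p • (aMon m : MvPolynomial (Fin n) K ⧸ I) := by
      change A.val.toLinearMap _ = _
      rw [map_sum]
      exact Finset.sum_congr rfl fun m _ => map_smul A.val.toLinearMap _ _
    rw [h1]
    have h2 : ∀ m ∈ p.support,
        coeff m p • (aMon m : MvPolynomial (Fin n) K ⧸ I)
          = Ideal.Quotient.mk I (monomial m (coeff m p)) := by
      intro m hm
      rw [haMonCoe m (hpsupp m hm)]
      have : (coeff m p) • monomial m (1:K) = monomial m (coeff m p) := by
        rw [smul_monomial, smul_eq_mul, mul_one]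
      rw [← this, ← Ideal.Quotient.mkₐ_eq_mk (R₁ := K), map_smul]
    rw [Finset.sum_congr rfl h2, ← map_sum, support_sum_monomial_coeff, hpπ]
  rw [hrepr]
  exact Submodule.sum_mem _ fun m hm =>
    Submodule.smul_of_tower_mem _ _ (hcore m (hpsupp m hm) (hkey m hm))
end

section
/- Let R be a universally Koszul standard graded K-algebra. Then for any linear forms ℓ_1,...,ℓ_d ∈ R_1 with ℓ_1⋯ℓ_d ≠ 0, the annihilator ideal 0 : (ℓ_1⋯ℓ_d) is generated by elements of degree 1. -/
/-- A standard graded `K`-algebra structure on `R`. -/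
structure StdGraded (K : Type) (R : Type) [Field K] [CommRing R] [Algebra K R] where
  grade : ℕ → Submodule K R
  grade_zero : grade 0 = 1
  mul_mem : ∀ (i j : ℕ) (r s : R), r ∈ grade i → s ∈ grade j → r * s ∈ grade (i + j)
  internal : DirectSum.IsInternal grade
  standard : ∀ i : ℕ, grade 1 * grade i = grade (i + 1)

namespace StdGraded

variable {K R : Type} [Field K] [CommRing R] [Algebra K R]

/-- The irrelevant maximal homogeneous ideal `m_R`. -/
def irrelevant (G : StdGraded K R) : Ideal R :=
  Ideal.span {r : R | ∃ i : ℕ, r ∈ G.grade (i + 1)}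

/-- `r` is homogeneous of degree `z` (or zero). -/
def homog (G : StdGraded K R) (z : ℤ) (r : R) : Prop :=
  r = 0 ∨ ∃ n : ℕ, (n : ℤ) = z ∧ r ∈ G.grade n

/-- An ideal is generated by elements of degree 1. -/
def Gen1 (G : StdGraded K R) (I : Ideal R) : Prop :=
  ∃ s : Set R, s ⊆ (G.grade 1 : Set R) ∧ I = Ideal.span s

end StdGraded

/-- A graded module structure over a standard graded algebra. -/
structure GradedMod {K R : Type} [Field K] [CommRing R] [Algebra K R] (G : StdGraded K R)
    (M : Type) [AddCommGroup M] [Module R M] [Module K M] [IsScalarTower K R M] where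
  grade : ℤ → Submodule K M
  smul_mem : ∀ (i : ℕ) (j : ℤ) (r : R) (m : M),
    r ∈ G.grade i → m ∈ grade j → r • m ∈ grade ((i : ℤ) + j)
  internal : DirectSum.IsInternal grade

/-- A minimal graded free resolution of the graded module `(M, gM)` over `(R, G)`.
The `i`-th free module is `ι i →₀ R` with basis elements of (twisted) degrees `deg i`. -/
structure MinFreeRes {K R : Type} [Field K] [CommRing R] [Algebra K R] (G : StdGraded K R)
    (M : Type) [AddCommGroup M] [Module R M] [Module K M] [IsScalarTower K R M]
    (gM : GradedMod G M) where
  ι : ℕ → Type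
  finite : ∀ i, Finite (ι i)
  deg : ∀ i, ι i → ℤ
  d : ∀ i : ℕ, ((ι (i + 1)) →₀ R) →ₗ[R] ((ι i) →₀ R)
  ε : ((ι 0) →₀ R) →ₗ[R] M
  ε_surj : Function.Surjective ε
  exact_zero : LinearMap.ker ε = LinearMap.range (d 0)
  exact : ∀ i, LinearMap.ker (d i) = LinearMap.range (d (i + 1))
  homog_d : ∀ (i : ℕ) (b : ι (i + 1)) (c : ι i),
      G.homog (deg (i + 1) b - deg i c) ((d i (Finsupp.single b 1)) c)
  homog_ε : ∀ b : ι 0, ε (Finsupp.single b 1) ∈ gM.grade (deg 0 b)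
  minimal : ∀ (i : ℕ) (b : ι (i + 1)) (c : ι i), ((d i (Finsupp.single b 1)) c) ∈ G.irrelevant

namespace MinFreeRes

variable {K R : Type} [Field K] [CommRing R] [Algebra K R] {G : StdGraded K R}
  {M : Type} [AddCommGroup M] [Module R M] [Module K M] [IsScalarTower K R M]
  {gM : GradedMod G M}

/-- `reg_R(M) ≤ r`: every `i`-th syzygy is generated in degrees `≤ r + i`. -/
def RegBound (F : MinFreeRes G M gM) (r : ℤ) : Prop :=
  ∀ (i : ℕ) (b : F.ι i), F.deg i b ≤ r + i

/-- `t_i^R(M) ≤ t`. -/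
def TBound (F : MinFreeRes G M gM) (i : ℕ) (t : ℤ) : Prop :=
  ∀ b : F.ι i, F.deg i b ≤ t

end MinFreeRes

/-- The grading on a quotient module `R ⧸ I` induced by the grading of `R`. -/
def QuotGrading {K R : Type} [Field K] [CommRing R] [Algebra K R] (G : StdGraded K R)
    (I : Ideal R) (gQ : GradedMod G (R ⧸ I)) : Prop :=
  (∀ j : ℕ, gQ.grade (j : ℤ) = (G.grade j).map (Ideal.Quotient.mkₐ K I).toLinearMap) ∧
  ∀ j : ℤ, j < 0 → gQ.grade j = ⊥

/-- `R` is a Koszul algebra: the residue field `K = R ⧸ m_R` has a linear minimal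
graded free resolution. -/
def StdGraded.IsKoszul {K R : Type} [Field K] [CommRing R] [Algebra K R]
    (G : StdGraded K R) : Prop :=
  ∃ (gK : GradedMod G (R ⧸ G.irrelevant)) (F : MinFreeRes G (R ⧸ G.irrelevant) gK),
    QuotGrading G G.irrelevant gK ∧ ∀ (i : ℕ) (b : F.ι i), F.deg i b = i

/-- `R` is universally Koszul: every colon ideal `I : x` of an ideal generated in degree 1
by an element `x ∈ R_1 \ I` is again generated in degree 1. -/
def StdGraded.UnivKoszul {K R : Type} [Field K] [CommRing R] [Algebra K R]
    (G : StdGraded K R) : Prop :=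
  ∀ I : Ideal R, G.Gen1 I → ∀ x ∈ G.grade 1, x ∉ I →
    G.Gen1 (Submodule.colon I (Ideal.span {x}))

/-- In a universally Koszul algebra, the annihilator of a nonzero product of linear forms is
generated by elements of degree 1. -/
theorem stmt_14 {K R : Type} [Field K] [CommRing R] [Algebra K R] (G : StdGraded K R)
    (h : G.UnivKoszul) (d : ℕ) (ℓ : Fin d → R) (hℓ : ∀ i, ℓ i ∈ G.grade 1)
    (hne : (∏ i, ℓ i) ≠ 0) :
    G.Gen1 (Submodule.colon (⊥ : Ideal R) (Ideal.span {∏ i, ℓ i})) := by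
  induction d with
  | zero =>
    refine ⟨∅, by simp, ?_⟩
    rw [Ideal.span_empty]
    ext r
    rw [Ideal.span, Submodule.mem_colon_span_singleton]
    simp
  | succ n ih =>
    have hprod : (∏ i, ℓ i) = (∏ i : Fin n, ℓ i.castSucc) * ℓ (Fin.last n) :=
      Fin.prod_univ_castSucc ℓ
    have hprev : (∏ i : Fin n, ℓ i.castSucc) ≠ 0 := by
      intro h0
      apply hne
      rw [hprod, h0, zero_mul]
    have key : Submodule.colon (⊥ : Ideal R) (Ideal.span {∏ i, ℓ i}) =
        Submodule.colon
          (Submodule.colon (⊥ : Ideal R) (Ideal.span {∏ i : Fin n, ℓ i.castSucc}))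
          (Ideal.span {ℓ (Fin.last n)}) := by
      ext r
      simp only [Ideal.span, Submodule.mem_colon_span_singleton, smul_eq_mul, Submodule.mem_bot, hprod]
      constructor
      · intro h0; linear_combination h0
      · intro h0; linear_combination h0
    rw [key]
    refine h _ (ih (fun i => ℓ i.castSucc) (fun i => hℓ i.castSucc) hprev)
      (ℓ (Fin.last n)) (hℓ (Fin.last n)) ?_
    intro hmem
    rw [Ideal.span, Submodule.mem_colon_span_singleton, smul_eq_mul, Submodule.mem_bot] at hmem
    apply hne
    rw [hprod, mul_comm]
    exact hmem
end
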